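/- Suppose ∑_{j∈J} γ_j < ∞ and C_j < ∞ for every j. Fix j ≠ k in J. If φ, φ̃ ∈ D(S) agree in every coordinate except possibly the k-th, then |Ξ_j(φ) − Ξ_j(φ̃)| ≤ 2 ((3|E̲| + ∑_{l∈J} γ_l + 2η_{j,0} + 2γ_j)/η_{j,k} + 2) C_j γ_k d_𝕋(φ_k, φ̃_k). -/

import Mathlib

open scoped Real BigOperators
open Real

noncomputable section

/-- Distance between the gaps indexed by `j` and `l`
(equals `dist ([Em j, Ep j], [Em l, Ep l])` when these closed intervals are disjoint). -/
def gapDist {J : Type*} (Em Ep : J → ℝ) (j l : J) : ℝ :=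
  max (Em l - Ep j) (Em j - Ep l)

/-- Length `γ_j = E_j^+ - E_j^-` of the `j`-th gap. -/
def gapLen {J : Type*} (Em Ep : J → ℝ) (j : J) : ℝ := Ep j - Em j

/-- Craig's constant `C_j = (η_{j,0} + γ_j)^{1/2} ∏_{l ≠ j} (1 + γ_l/η_{j,l})^{1/2}`. -/
def CraigC {J : Type*} (Em Ep : J → ℝ) (E0 : ℝ) (j : J) : ℝ :=
  Real.sqrt ((Em j - E0) + gapLen Em Ep j) *
    ∏' l : {l : J // l ≠ j}, Real.sqrt (1 + gapLen Em Ep l / gapDist Em Ep j l)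

/-- `μ_j(φ) = E_j^- + γ_j cos²(φ_j/2) = E_j^- + γ_j (1 + cos φ_j)/2`. -/
def muD {J : Type*} (Em Ep : J → ℝ) (φ : J → Real.Angle) (j : J) : ℝ :=
  Em j + gapLen Em Ep j * ((1 + Real.Angle.cos (φ j)) / 2)

/-- `Q_1(φ) = E̲ + ∑_j (E_j^- + E_j^+ - 2 μ_j)`. -/
def Q1D {J : Type*} (Em Ep : J → ℝ) (E0 : ℝ) (φ : J → Real.Angle) : ℝ :=
  E0 + ∑' j : J, (Em j + Ep j - 2 * muD Em Ep φ j)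

/-- `Ψ_j(φ) = 2 ((μ_j - E̲) ∏_{l≠j} (E_l^- - μ_j)(E_l^+ - μ_j)/(μ_l - μ_j)²)^{1/2}`. -/
def PsiD {J : Type*} (Em Ep : J → ℝ) (E0 : ℝ) (φ : J → Real.Angle) (j : J) : ℝ :=
  2 * Real.sqrt ((muD Em Ep φ j - E0) *
    ∏' l : {l : J // l ≠ j},
      ((Em l - muD Em Ep φ j) * (Ep l - muD Em Ep φ j) /
        (muD Em Ep φ l - muD Em Ep φ j) ^ 2))

/-- `Ξ_j(φ) = -2 (Q_1(φ) + 2 μ_j) Ψ_j(φ)`. -/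
def XiD {J : Type*} (Em Ep : J → ℝ) (E0 : ℝ) (φ : J → Real.Angle) (j : J) : ℝ :=
  -2 * (Q1D Em Ep E0 φ + 2 * muD Em Ep φ j) * PsiD Em Ep E0 φ j


lemma tprod_nonneg' {ι : Type*} {f : ι → ℝ} (h : ∀ i, 0 ≤ f i) : 0 ≤ ∏' i, f i := by
  by_cases hf : Multipliable f
  · exact ge_of_tendsto' hf.hasProd fun s => Finset.prod_nonneg fun i _ => h i
  · rw [tprod_eq_one_of_not_multipliable hf]; norm_num

lemma tprod_le_tprod_real {ι : Type*} {f g : ι → ℝ} (h0 : ∀ i, 0 ≤ f i) (hle : ∀ i, f i ≤ g i)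
    (hf : Multipliable f) (hg : Multipliable g) : ∏' i, f i ≤ ∏' i, g i :=
  le_of_tendsto_of_tendsto' hf.hasProd hg.hasProd fun s =>
    Finset.prod_le_prod (fun i _ => h0 i) fun i _ => hle i

lemma prod_sub_le_real {ι : Type*} {f : ι → ℝ} (h1 : ∀ i, 1 ≤ f i) {s t : Finset ι}
    (hst : s ⊆ t) : ∏ i ∈ s, f i ≤ ∏ i ∈ t, f i := by
  classical
  rw [← Finset.prod_sdiff hst]
  have h0 : (0:ℝ) ≤ ∏ i ∈ s, f i := Finset.prod_nonneg fun i _ => le_trans zero_le_one (h1 i)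
  have h1' : (1:ℝ) ≤ ∏ i ∈ t \ s, f i := by
    calc (1:ℝ) = ∏ _i ∈ t \ s, (1:ℝ) := by simp
    _ ≤ ∏ i ∈ t \ s, f i := Finset.prod_le_prod (fun i _ => zero_le_one) fun i _ => h1 i
  nlinarith

lemma prod_le_tprod_real {ι : Type*} {f : ι → ℝ} (h1 : ∀ i, 1 ≤ f i) (hf : Multipliable f)
    (s : Finset ι) : ∏ i ∈ s, f i ≤ ∏' i, f i :=
  ge_of_tendsto hf.hasProd
    (Filter.eventually_atTop.2 ⟨s, fun _ ht => prod_sub_le_real h1 ht⟩)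

lemma one_add_sum_le_prod_real {ι : Type*} {x : ι → ℝ} (hx : ∀ i, 0 ≤ x i) (s : Finset ι) :
    1 + ∑ i ∈ s, x i ≤ ∏ i ∈ s, (1 + x i) := by
  classical
  induction s using Finset.cons_induction with
  | empty => simp
  | cons a s ha ih =>
    rw [Finset.sum_cons, Finset.prod_cons]
    have h1 : 0 ≤ ∑ i ∈ s, x i := Finset.sum_nonneg fun i _ => hx i
    nlinarith [hx a]

lemma summable_of_multipliable_one_add {ι : Type*} {x : ι → ℝ} (hx : ∀ i, 0 ≤ x i)
    (h : Multipliable fun i => 1 + x i) : Summable x := by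
  refine summable_of_sum_le (c := ∏' i, (1 + x i)) hx fun s => ?_
  have h1 : ∀ i, (1:ℝ) ≤ 1 + x i := fun i => by linarith [hx i]
  have := (one_add_sum_le_prod_real hx s).trans (prod_le_tprod_real h1 h s)
  linarith

lemma angle_cos_le_one (θ : Real.Angle) : -1 ≤ θ.cos ∧ θ.cos ≤ 1 := by
  induction θ using Real.Angle.induction_on with
  | h x => rw [Real.Angle.cos_coe]; exact ⟨Real.neg_one_le_cos x, Real.cos_le_one x⟩

lemma abs_angle_cos_sub_le (a b : Real.Angle) :
    |Real.Angle.cos a - Real.Angle.cos b| ≤ dist a b := by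
  induction a using Real.Angle.induction_on with
  | h x =>
  induction b using Real.Angle.induction_on with
  | h y =>
  rw [Real.Angle.cos_coe, Real.Angle.cos_coe, dist_eq_norm, ← Real.Angle.coe_sub]
  have hnorm : ‖((x - y : ℝ) : Real.Angle)‖
      = |(x - y) - round ((2*π)⁻¹ * (x - y)) * (2*π)| := AddCircle.norm_eq (2*π)
  rw [hnorm]
  set n : ℤ := round ((2*π)⁻¹ * (x - y)) with hn
  set t : ℝ := (x - y) - n * (2*π) with ht
  have hx : Real.cos x = Real.cos (y + t) := by
    have hxy : x = (y + t) + (n : ℝ) * (2*π) := by rw [ht]; ring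
    rw [hxy, Real.cos_add_int_mul_two_pi]
  rw [hx]
  have hform := Real.cos_sub_cos (y + t) y
  rw [hform]
  have h1 : |Real.sin ((y + t + y) / 2)| ≤ 1 := abs_sin_le_one _
  have h2 : |Real.sin ((y + t - y) / 2)| ≤ |t| / 2 := by
    have := Real.abs_sin_le_abs (x := (y + t - y)/2)
    have he : |(y + t - y)/2| = |t|/2 := by
      rw [show (y + t - y)/2 = t/2 by ring, abs_div]; norm_num
    linarith [this, he.le]
  calc |(-2) * Real.sin ((y + t + y) / 2) * Real.sin ((y + t - y) / 2)|
      = 2 * (|Real.sin ((y + t + y) / 2)| * |Real.sin ((y + t - y) / 2)|) := by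
        rw [abs_mul, abs_mul]; simp [abs_of_nonneg]; ring
    _ ≤ 2 * (1 * (|t| / 2)) := by
        apply mul_le_mul_of_nonneg_left _ (by norm_num)
        exact mul_le_mul h1 h2 (abs_nonneg _) zero_le_one
    _ = |t| := by ring

lemma ratio_est {η A D B γ : ℝ} (hη : 0 < η) (hA : η ≤ A) (hAD : A ≤ D) (hDB : D ≤ B)
    (hB : B = A + γ) :
    1 / (1 + γ / η) ≤ A * B / D ^ 2 ∧ A * B / D ^ 2 ≤ 1 + γ / η := by
  have hA0 : 0 < A := lt_of_lt_of_le hη hA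
  have hD0 : 0 < D := lt_of_lt_of_le hA0 hAD
  have hB0 : 0 < B := lt_of_lt_of_le hD0 hDB
  have hγ : 0 ≤ γ := by linarith
  have hq0 : 0 ≤ γ / η := div_nonneg hγ hη.le
  have hq : γ = (γ / η) * η := by field_simp
  set q := γ / η with hqdef
  have hx : (0:ℝ) < 1 + q := by linarith
  constructor
  · rw [div_le_div_iff₀ hx (by positivity)]
    -- 1 * D^2 ≤ A * B * (1 + q)
    nlinarith [mul_le_mul_of_nonneg_left hA (mul_nonneg hq0 hB0.le),
      mul_le_mul_of_nonneg_left hDB hD0.le, mul_le_mul_of_nonneg_left hDB hB0.le]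
  · rw [div_le_iff₀ (by positivity)]
    -- A * B ≤ (1 + q) * D ^ 2
    nlinarith [mul_le_mul_of_nonneg_left hA (mul_nonneg hq0 hA0.le),
      mul_le_mul_of_nonneg_left hAD hA0.le, mul_le_mul_of_nonneg_left hAD hD0.le]

lemma factor_est {Eml Epl Emj Epj m p η : ℝ}
    (hηpos : 0 < η) (hηdef : η = max (Eml - Epj) (Emj - Epl))
    (hm1 : Emj ≤ m) (hm2 : m ≤ Epj) (hp1 : Eml ≤ p) (hp2 : p ≤ Epl) :
    η ≤ |p - m| ∧
    1 / (1 + (Epl - Eml) / η) ≤ (Eml - m) * (Epl - m) / (p - m) ^ 2 ∧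
    (Eml - m) * (Epl - m) / (p - m) ^ 2 ≤ 1 + (Epl - Eml) / η := by
  rcases max_choice (Eml - Epj) (Emj - Epl) with h | h
  · have hη' : η = Eml - Epj := by rw [hηdef, h]
    have hA : η ≤ Eml - m := by linarith
    have hAD : Eml - m ≤ p - m := by linarith
    have hDB : p - m ≤ Epl - m := by linarith
    have hre := ratio_est hηpos hA hAD hDB (show Epl - m = (Eml - m) + (Epl - Eml) by ring)
    exact ⟨le_trans (le_trans hA hAD) (le_abs_self _), hre.1, hre.2⟩
  · have hη' : η = Emj - Epl := by rw [hηdef, h]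
    have hA : η ≤ m - Epl := by linarith
    have hAD : m - Epl ≤ m - p := by linarith
    have hDB : m - p ≤ m - Eml := by linarith
    have hre := ratio_est hηpos hA hAD hDB (show m - Eml = (m - Epl) + (Epl - Eml) by ring)
    have key : (Eml - m) * (Epl - m) = (m - Epl) * (m - Eml) := by ring
    have key2 : (p - m) ^ 2 = (m - p) ^ 2 := by ring
    rw [key, key2]
    refine ⟨?_, hre.1, hre.2⟩
    rw [abs_sub_comm]
    exact le_trans (le_trans hA hAD) (le_abs_self _)

/-- Single-coordinate Lipschitz estimate for `Ξ_j` in the `k`-th coordinate (`k ≠ j`):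
if `φ, φ̃` agree in every coordinate except possibly the `k`-th, then
`|Ξ_j(φ) - Ξ_j(φ̃)| ≤ 2((3|E̲| + ∑_l γ_l + 2η_{j,0} + 2γ_j)/η_{j,k} + 2) C_j γ_k d_𝕋(φ_k, φ̃_k)`. -/
theorem xi_single_coordinate_lipschitz
    {J : Type*} [Countable J] (Em Ep : J → ℝ) (E0 : ℝ)
    (hlt : ∀ j, Em j < Ep j) (hE0 : ∀ j, E0 < Em j)
    (hsep : ∀ j l : J, j ≠ l → 0 < gapDist Em Ep j l)
    (hsum : Summable fun j => gapLen Em Ep j)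
    (hCfin : ∀ j, Multipliable fun l : {l : J // l ≠ j} =>
      Real.sqrt (1 + gapLen Em Ep l / gapDist Em Ep j l))
    (j k : J) (hjk : j ≠ k)
    (φ ψ : J → Real.Angle) (hagree : ∀ l : J, l ≠ k → φ l = ψ l) :
    |XiD Em Ep E0 φ j - XiD Em Ep E0 ψ j| ≤
      2 * ((3 * |E0| + (∑' l : J, gapLen Em Ep l) + 2 * (Em j - E0) + 2 * gapLen Em Ep j) /
            gapDist Em Ep j k + 2) *
        CraigC Em Ep E0 j * gapLen Em Ep k * dist (φ k) (ψ k) := by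
  classical
  have hγ0 : ∀ l, 0 ≤ gapLen Em Ep l := fun l => by
    have := hlt l; unfold gapLen; linarith
  have hmu : ∀ (χ : J → Real.Angle) (l : J),
      Em l ≤ muD Em Ep χ l ∧ muD Em Ep χ l ≤ Ep l := by
    intro χ l
    obtain ⟨h1, h2⟩ := angle_cos_le_one (χ l)
    have h3 := hγ0 l
    unfold gapLen at h3
    unfold muD gapLen
    constructor <;> nlinarith
  set m := muD Em Ep φ j with hmdef
  have hmψ : muD Em Ep ψ j = m := by
    rw [hmdef]; unfold muD; rw [hagree j hjk]
  have hmj1 : Em j ≤ m := (hmu φ j).1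
  have hmj2 : m ≤ Ep j := (hmu φ j).2
  have hE0m : 0 ≤ m - E0 := by have := hE0 j; linarith
  -- the factor functions
  set F : (J → Real.Angle) → {l : J // l ≠ j} → ℝ := fun χ l =>
    (Em l - m) * (Ep l - m) / (muD Em Ep χ l - m) ^ 2 with hFdef
  set x : {l : J // l ≠ j} → ℝ := fun l =>
    gapLen Em Ep l / gapDist Em Ep j l with hxdef
  have hx0 : ∀ l, 0 ≤ x l := fun l => div_nonneg (hγ0 l) (hsep j l (Ne.symm l.2)).le
  have h1x : ∀ l, (0:ℝ) < 1 + x l := fun l => by have := hx0 l; linarith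
  have hfact : ∀ (χ : J → Real.Angle) (l : {l : J // l ≠ j}),
      gapDist Em Ep j l ≤ |muD Em Ep χ l - m| ∧
      1 / (1 + x l) ≤ F χ l ∧ F χ l ≤ 1 + x l := by
    intro χ l
    have hpos := hsep j l (Ne.symm l.2)
    have h := factor_est (Eml := Em l) (Epl := Ep l) (Emj := Em j) (Epj := Ep j)
        (m := m) (p := muD Em Ep χ l) (η := gapDist Em Ep j l)
        hpos rfl hmj1 hmj2 (hmu χ l).1 (hmu χ l).2
    exact ⟨h.1, h.2.1, h.2.2⟩
  have hF0 : ∀ χ l, 0 < F χ l := by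
    intro χ l
    have h := h1x l
    exact lt_of_lt_of_le (by positivity) (hfact χ l).2.1
  -- summability of x
  have hM1 : Multipliable (fun l : {l : J // l ≠ j} => 1 + x l) := by
    have h2 := (hCfin j).mul (hCfin j)
    refine (multipliable_congr fun l => ?_).2 h2
    exact (Real.mul_self_sqrt (h1x l).le).symm
  have hSx : Summable x := summable_of_multipliable_one_add hx0 hM1
  -- multipliability of the factors
  have hMF : ∀ χ, Multipliable (F χ) := by
    intro χ
    apply Real.multipliable_of_summable_log (fun l => hF0 χ l)
    refine Summable.of_abs (Summable.of_nonneg_of_le (fun l => abs_nonneg _) (fun l => ?_) hSx)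
    have hFpos := hF0 χ l
    have h1 := Real.log_le_sub_one_of_pos hFpos
    have h4 : (F χ l)⁻¹ ≤ 1 + x l := by
      have h5 : 1 ≤ (1 + x l) * F χ l := by
        have h6 := mul_le_mul_of_nonneg_left (hfact χ l).2.1 (h1x l).le
        have h7 : (1 + x l) * (1 / (1 + x l)) = 1 := mul_one_div_cancel (ne_of_gt (h1x l))
        linarith
      have h8 := mul_le_mul_of_nonneg_left h5 (inv_nonneg.2 hFpos.le)
      have h9 : (F χ l)⁻¹ * ((1 + x l) * F χ l) = 1 + x l := by field_simp
      rw [mul_one] at h8; linarith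
    have h2 : -Real.log (F χ l) ≤ x l := by
      rw [← Real.log_inv]
      have h3 := Real.log_le_sub_one_of_pos (inv_pos.2 hFpos)
      linarith
    rw [abs_le]
    constructor
    · linarith
    · have := (hfact χ l).2.2; linarith
  -- the distinguished index
  set k' : {l : J // l ≠ j} := ⟨k, Ne.symm hjk⟩ with hk'def
  set da : ℝ := muD Em Ep φ k - m with hdadef
  set db : ℝ := muD Em Ep ψ k - m with hdbdef
  have hη : 0 < gapDist Em Ep j k := hsep j k hjk
  have hda : gapDist Em Ep j k ≤ |da| := (hfact φ k').1
  have hdb : gapDist Em Ep j k ≤ |db| := (hfact ψ k').1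
  have hda0 : da ≠ 0 := by
    intro h; rw [h] at hda; simp at hda; linarith
  have hdb0 : db ≠ 0 := by
    intro h; rw [h] at hdb; simp at hdb; linarith
  -- relating the two products
  set r : {l : J // l ≠ j} → ℝ := fun l => if l = k' then da ^ 2 / db ^ 2 else 1 with hrdef
  have hr : ∀ l, F ψ l = F φ l * r l := by
    intro l
    by_cases hl : l = k'
    · subst hl
      simp only [hrdef, if_pos rfl, hFdef]
      rw [div_mul_div_comm]
      rw [div_eq_div_iff (by positivity) (by positivity)]
      ring
    · have hlk : (l : J) ≠ k := fun hc => hl (Subtype.ext hc)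
      simp only [hrdef, if_neg hl, mul_one, hFdef]
      have : muD Em Ep ψ (l : J) = muD Em Ep φ (l : J) := by
        unfold muD; rw [hagree (l : J) hlk]
      rw [this]
  have hMr : Multipliable r := ⟨r k', hasProd_single k' fun b hb => if_neg hb⟩
  have htr : ∏' l, r l = da ^ 2 / db ^ 2 := by
    rw [tprod_eq_mulSingle k' fun b hb => if_neg hb]
    simp [hrdef]
  have hTψ : ∏' l, F ψ l = (∏' l, F φ l) * (da ^ 2 / db ^ 2) := by
    rw [tprod_congr hr, Multipliable.tprod_mul (hMF φ) hMr, htr]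
  set P : ℝ := (m - E0) * ∏' l, F φ l with hPdef
  have hT0 : 0 ≤ ∏' l, F φ l := tprod_nonneg' fun l => (hF0 φ l).le
  have hP0 : 0 ≤ P := mul_nonneg hE0m hT0
  have hΨφval : PsiD Em Ep E0 φ j = 2 * Real.sqrt P := by
    unfold PsiD
    rw [← hmdef, hPdef, hFdef]
  have hΨψ : PsiD Em Ep E0 ψ j = 2 * (Real.sqrt P * (|da| / |db|)) := by
    unfold PsiD
    rw [hmψ]
    have hbody : ((m - E0) * ∏' l : {l : J // l ≠ j},
        ((Em l - m) * (Ep l - m) / (muD Em Ep ψ l - m) ^ 2)) = P * (da / db) ^ 2 := by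
      have : (∏' l : {l : J // l ≠ j},
          ((Em l - m) * (Ep l - m) / (muD Em Ep ψ l - m) ^ 2)) = ∏' l, F ψ l := by
        rw [hFdef]
      rw [this, hTψ, hPdef, div_pow]; ring
    rw [hbody, Real.sqrt_mul hP0, Real.sqrt_sq_eq_abs, abs_div]
  -- bounding sqrt P by CraigC
  have hQs0 : 0 ≤ ∏' l : {l : J // l ≠ j},
      Real.sqrt (1 + gapLen Em Ep l / gapDist Em Ep j l) :=
    tprod_nonneg' fun l => Real.sqrt_nonneg _
  have hPi : (∏' l, (1 + x l)) = (∏' l : {l : J // l ≠ j},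
      Real.sqrt (1 + gapLen Em Ep l / gapDist Em Ep j l)) *
      (∏' l : {l : J // l ≠ j},
      Real.sqrt (1 + gapLen Em Ep l / gapDist Em Ep j l)) := by
    rw [← Multipliable.tprod_mul (hCfin j) (hCfin j)]
    exact tprod_congr fun l => (Real.mul_self_sqrt (h1x l).le).symm
  have hsqrtP : Real.sqrt P ≤ CraigC Em Ep E0 j := by
    have hTle : (∏' l, F φ l) ≤ ∏' l, (1 + x l) :=
      tprod_le_tprod_real (fun l => (hF0 φ l).le) (fun l => (hfact φ l).2.2) (hMF φ) hM1
    have hη0γ : 0 ≤ (Em j - E0) + gapLen Em Ep j := by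
      have := hE0 j; have := hγ0 j; linarith
    have hPle : P ≤ ((Em j - E0) + gapLen Em Ep j) * ∏' l, (1 + x l) := by
      apply mul_le_mul _ hTle hT0 hη0γ
      have := hγ0 j; unfold gapLen at this ⊢; linarith
    calc Real.sqrt P ≤ Real.sqrt (((Em j - E0) + gapLen Em Ep j) * ∏' l, (1 + x l)) :=
          Real.sqrt_le_sqrt hPle
      _ = CraigC Em Ep E0 j := by
          rw [hPi, Real.sqrt_mul hη0γ, Real.sqrt_mul_self hQs0]; rfl
  have hC0 : 0 ≤ CraigC Em Ep E0 j := le_trans (Real.sqrt_nonneg P) hsqrtP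
  -- Q1 estimates
  have hgabs : ∀ (χ : J → Real.Angle) (l : J),
      |Em l + Ep l - 2 * muD Em Ep χ l| ≤ gapLen Em Ep l := by
    intro χ l
    obtain ⟨h1, h2⟩ := hmu χ l
    rw [abs_le]; unfold gapLen; constructor <;> linarith
  have hgsumabs : ∀ χ, Summable (fun l => |Em l + Ep l - 2 * muD Em Ep χ l|) := fun χ =>
    Summable.of_nonneg_of_le (fun l => abs_nonneg _) (hgabs χ) hsum
  have hgsum : ∀ χ, Summable (fun l => Em l + Ep l - 2 * muD Em Ep χ l) := fun χ =>
    (hgsumabs χ).of_abs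
  have hQdiff : Q1D Em Ep E0 φ - Q1D Em Ep E0 ψ
      = -2 * (muD Em Ep φ k - muD Em Ep ψ k) := by
    unfold Q1D
    have h1 : (∑' l, (Em l + Ep l - 2 * muD Em Ep φ l))
        - (∑' l, (Em l + Ep l - 2 * muD Em Ep ψ l))
        = ∑' l, ((Em l + Ep l - 2 * muD Em Ep φ l) - (Em l + Ep l - 2 * muD Em Ep ψ l)) :=
      (Summable.tsum_sub (hgsum φ) (hgsum ψ)).symm
    have h2 : (∑' l, ((Em l + Ep l - 2 * muD Em Ep φ l) - (Em l + Ep l - 2 * muD Em Ep ψ l)))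
        = (Em k + Ep k - 2 * muD Em Ep φ k) - (Em k + Ep k - 2 * muD Em Ep ψ k) := by
      apply tsum_eq_single
      intro l hl
      have : muD Em Ep φ l = muD Em Ep ψ l := by unfold muD; rw [hagree l hl]
      rw [this]; ring
    have h3 := h1.trans h2
    linarith [h3]
  have hSψb : |∑' l, (Em l + Ep l - 2 * muD Em Ep ψ l)| ≤ ∑' l, gapLen Em Ep l := by
    have h1 : ‖∑' l, (Em l + Ep l - 2 * muD Em Ep ψ l)‖
        ≤ ∑' l, ‖Em l + Ep l - 2 * muD Em Ep ψ l‖ := by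
      apply norm_tsum_le_tsum_norm
      simpa [Real.norm_eq_abs] using hgsumabs ψ
    rw [Real.norm_eq_abs] at h1
    refine h1.trans ?_
    have h2 : ∀ l, ‖Em l + Ep l - 2 * muD Em Ep ψ l‖ ≤ gapLen Em Ep l := by
      intro l; rw [Real.norm_eq_abs]; exact hgabs ψ l
    exact Summable.tsum_le_tsum h2 (by simpa [Real.norm_eq_abs] using hgsumabs ψ) hsum
  have hmabs : |m| ≤ |E0| + (Em j - E0) + gapLen Em Ep j := by
    rw [abs_le]
    have h1 := le_abs_self E0
    have h2 := neg_abs_le E0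
    have h3 := hγ0 j
    have h4 := hE0 j
    unfold gapLen at h3 ⊢
    constructor <;> linarith
  have hQb : |Q1D Em Ep E0 ψ + 2 * m|
      ≤ 3 * |E0| + (∑' l : J, gapLen Em Ep l) + 2 * (Em j - E0) + 2 * gapLen Em Ep j := by
    unfold Q1D
    calc |E0 + (∑' l, (Em l + Ep l - 2 * muD Em Ep ψ l)) + 2 * m|
        ≤ |E0| + |∑' l, (Em l + Ep l - 2 * muD Em Ep ψ l)| + |2 * m| := by
          refine (abs_add_le _ _).trans ?_
          have := abs_add_le E0 (∑' l, (Em l + Ep l - 2 * muD Em Ep ψ l))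
          linarith
      _ ≤ 3 * |E0| + (∑' l : J, gapLen Em Ep l) + 2 * (Em j - E0) + 2 * gapLen Em Ep j := by
          rw [abs_mul, abs_two]
          linarith [hSψb, hmabs]
  have hA0 : 0 ≤ 3 * |E0| + (∑' l : J, gapLen Em Ep l) + 2 * (Em j - E0) + 2 * gapLen Em Ep j :=
    le_trans (abs_nonneg _) hQb
  -- Lipschitz bound on μ_k
  have hδ0 : 0 ≤ dist (φ k) (ψ k) := dist_nonneg
  have hΔμ : |muD Em Ep φ k - muD Em Ep ψ k|
      ≤ gapLen Em Ep k / 2 * dist (φ k) (ψ k) := by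
    have hcos := abs_angle_cos_sub_le (φ k) (ψ k)
    have heq : muD Em Ep φ k - muD Em Ep ψ k
        = gapLen Em Ep k * ((Real.Angle.cos (φ k) - Real.Angle.cos (ψ k)) / 2) := by
      unfold muD; ring
    rw [heq, abs_mul, abs_of_nonneg (hγ0 k), abs_div, abs_two]
    calc gapLen Em Ep k * (|Real.Angle.cos (φ k) - Real.Angle.cos (ψ k)| / 2)
        ≤ gapLen Em Ep k * (dist (φ k) (ψ k) / 2) := by
          apply mul_le_mul_of_nonneg_left _ (hγ0 k)
          linarith
      _ = gapLen Em Ep k / 2 * dist (φ k) (ψ k) := by ring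
  -- bound on the Psi difference
  have hΔΨ : |PsiD Em Ep E0 φ j - PsiD Em Ep E0 ψ j|
      ≤ 2 * CraigC Em Ep E0 j * (gapLen Em Ep k / 2 * dist (φ k) (ψ k)) / gapDist Em Ep j k := by
    rw [hΨφval, hΨψ]
    have hdbabs : (0:ℝ) < |db| := lt_of_lt_of_le hη hdb
    have heq : 2 * Real.sqrt P - 2 * (Real.sqrt P * (|da| / |db|))
        = 2 * Real.sqrt P * ((|db| - |da|) / |db|) := by
      field_simp
    rw [heq, abs_mul, abs_div]
    have h1 : |2 * Real.sqrt P| = 2 * Real.sqrt P := by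
      rw [abs_of_nonneg]; positivity
    rw [h1, abs_abs]
    have h2 : |(|db| - |da|)| ≤ gapLen Em Ep k / 2 * dist (φ k) (ψ k) := by
      refine (abs_abs_sub_abs_le_abs_sub db da).trans ?_
      have : db - da = -(muD Em Ep φ k - muD Em Ep ψ k) := by
        rw [hdadef, hdbdef]; ring
      rw [this, abs_neg]
      exact hΔμ
    have h3 : |(|db| - |da|)| / |db| ≤ (gapLen Em Ep k / 2 * dist (φ k) (ψ k)) / gapDist Em Ep j k := by
      apply div_le_div₀ (mul_nonneg (by linarith [hγ0 k]) hδ0) h2 hη hdb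
    calc 2 * Real.sqrt P * (|(|db| - |da|)| / |db|)
        ≤ (2 * CraigC Em Ep E0 j) * ((gapLen Em Ep k / 2 * dist (φ k) (ψ k)) / gapDist Em Ep j k) := by
          apply mul_le_mul (by linarith [hsqrtP]) h3 (by positivity) (by positivity)
      _ = 2 * CraigC Em Ep E0 j * (gapLen Em Ep k / 2 * dist (φ k) (ψ k)) / gapDist Em Ep j k := by
          ring
  -- assembling
  have hXi : XiD Em Ep E0 φ j - XiD Em Ep E0 ψ j
      = -2 * ((Q1D Em Ep E0 φ - Q1D Em Ep E0 ψ) * PsiD Em Ep E0 φ j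
        + (Q1D Em Ep E0 ψ + 2 * m) * (PsiD Em Ep E0 φ j - PsiD Em Ep E0 ψ j)) := by
    unfold XiD
    rw [hmψ, ← hmdef]
    ring
  have hΨφle : |PsiD Em Ep E0 φ j| ≤ 2 * CraigC Em Ep E0 j := by
    rw [hΨφval, abs_of_nonneg (by positivity)]
    linarith [hsqrtP]
  have hQdabs : |Q1D Em Ep E0 φ - Q1D Em Ep E0 ψ| ≤ gapLen Em Ep k * dist (φ k) (ψ k) := by
    rw [hQdiff, abs_mul]
    have : |(-2 : ℝ)| = 2 := by norm_num
    rw [this]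
    linarith [hΔμ]
  calc |XiD Em Ep E0 φ j - XiD Em Ep E0 ψ j|
      = 2 * |(Q1D Em Ep E0 φ - Q1D Em Ep E0 ψ) * PsiD Em Ep E0 φ j
        + (Q1D Em Ep E0 ψ + 2 * m) * (PsiD Em Ep E0 φ j - PsiD Em Ep E0 ψ j)| := by
        rw [hXi, abs_mul]
        norm_num
    _ ≤ 2 * (|Q1D Em Ep E0 φ - Q1D Em Ep E0 ψ| * |PsiD Em Ep E0 φ j|
        + |Q1D Em Ep E0 ψ + 2 * m| * |PsiD Em Ep E0 φ j - PsiD Em Ep E0 ψ j|) := by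
        have := abs_add_le ((Q1D Em Ep E0 φ - Q1D Em Ep E0 ψ) * PsiD Em Ep E0 φ j)
          ((Q1D Em Ep E0 ψ + 2 * m) * (PsiD Em Ep E0 φ j - PsiD Em Ep E0 ψ j))
        rw [abs_mul, abs_mul] at this
        linarith
    _ ≤ 2 * ((gapLen Em Ep k * dist (φ k) (ψ k)) * (2 * CraigC Em Ep E0 j)
        + (3 * |E0| + (∑' l : J, gapLen Em Ep l) + 2 * (Em j - E0) + 2 * gapLen Em Ep j)
          * (2 * CraigC Em Ep E0 j * (gapLen Em Ep k / 2 * dist (φ k) (ψ k)) / gapDist Em Ep j k)) := by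
        have t1 := mul_le_mul hQdabs hΨφle (abs_nonneg _)
          (mul_nonneg (hγ0 k) hδ0)
        have t2 := mul_le_mul hQb hΔΨ (abs_nonneg _) hA0
        linarith
    _ = 2 * ((3 * |E0| + (∑' l : J, gapLen Em Ep l) + 2 * (Em j - E0) + 2 * gapLen Em Ep j) /
            gapDist Em Ep j k + 2) * CraigC Em Ep E0 j * gapLen Em Ep k * dist (φ k) (ψ k) := by
        field_simp
        ring
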